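/- Let I ⊆ K[x₁,...,xₙ] be an ideal and g₁,...,g_k a Gröbner basis of I with respect to the lexicographic order with x₁ ≺ x₂ ≺ ... ≺ xₙ. Then for each j, the j-th elimination ideal I_j = I ∩ K[x₁,...,x_j] is generated by those g_i that lie in K[x₁,...,x_j], and {g_i : g_i ∈ K[x₁,...,x_j]} is a Gröbner basis of I_j. -/

import Mathlib

open MvPolynomial
open scoped MonomialOrder

variable {K : Type*} [Field K] {σ : Type*}

/-- The exponent of the leading term of a polynomial with respect to a monomial order
(the maximum of the support; `0` for the zero polynomial). -/
noncomputable def leadExp (m : MonomialOrder σ) (f : MvPolynomial σ K) : σ →₀ ℕ :=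
  m.toSyn.symm (f.support.sup fun α => m.toSyn α)

/-- `g₁,…,g_k` is a Gröbner basis of `I` w.r.t. the monomial order `m`: the `gᵢ` lie in `I`,
and the leading terms of the `gᵢ` generate the leading term ideal of `I`; equivalently, the
leading monomial of every nonzero `f ∈ I` is divisible by the leading monomial of some
nonzero `gᵢ`. -/
def IsGroebnerBasis (m : MonomialOrder σ) {k : ℕ} (g : Fin k → MvPolynomial σ K)
    (I : Ideal (MvPolynomial σ K)) : Prop :=
  (∀ i, g i ∈ I) ∧
    ∀ f ∈ I, f ≠ 0 → ∃ i, g i ≠ 0 ∧ leadExp m (g i) ≤ leadExp m f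

namespace GBaux

lemma leadExp_mem (m : MonomialOrder σ) {f : MvPolynomial σ K} (hf : f ≠ 0) :
    leadExp m f ∈ f.support := by
  obtain ⟨b, hb, hb'⟩ := Finset.exists_mem_eq_sup f.support
    (MvPolynomial.support_nonempty.mpr hf) (fun α => m.toSyn α)
  rw [leadExp, hb']
  simpa using hb

lemma le_toSyn_leadExp (m : MonomialOrder σ) {f : MvPolynomial σ K} {α : σ →₀ ℕ}
    (hα : α ∈ f.support) : m.toSyn α ≤ m.toSyn (leadExp m f) := by
  rw [leadExp, AddEquiv.apply_symm_apply]
  exact Finset.le_sup hα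

lemma coeff_eq_zero_of_lt (m : MonomialOrder σ) {f : MvPolynomial σ K} {e : σ →₀ ℕ}
    (h : m.toSyn (leadExp m f) < m.toSyn e) : MvPolynomial.coeff e f = 0 := by
  by_contra hc
  exact absurd (le_toSyn_leadExp m (MvPolynomial.mem_support_iff.mpr hc)) (not_le.mpr h)

lemma mem_supported_iff' {S : Set σ} {p : MvPolynomial σ K} :
    p ∈ supported K S ↔ ∀ d ∈ p.support, ∀ v ∈ d.support, v ∈ S := by
  rw [mem_supported]
  constructor
  · intro h d hd v hv
    exact h (by simpa using (MvPolynomial.mem_vars v).mpr ⟨d, hd, hv⟩)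
  · intro h v hv
    simp only [Finset.coe_sort_coe, Finset.mem_coe] at hv
    obtain ⟨d, hd, hv'⟩ := (MvPolynomial.mem_vars v).mp hv
    exact h d hd v hv'

/-- If `toLex α ≤ toLex β` and all variables of `β` have index `≥ N`, the same holds for `α`. -/
lemma support_ge_of_lex_le {n N : ℕ} {α β : Fin n →₀ ℕ}
    (h : toLex α ≤ toLex β) (hβ : ∀ v ∈ β.support, N ≤ (v : ℕ)) :
    ∀ v ∈ α.support, N ≤ (v : ℕ) := by
  intro v hv
  by_contra hvN
  push_neg at hvN
  rcases eq_or_lt_of_le h with heq | hlt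
  · have : α = β := toLex.injective heq
    exact absurd (hβ v (this ▸ hv)) (not_le.mpr hvN)
  · obtain ⟨i, hji, hi⟩ := Finsupp.Lex.lt_iff.mp hlt
    simp only [ofLex_toLex] at hji hi
    have hβi : β i ≠ 0 := fun h0 => by simp [h0] at hi
    have hiN : N ≤ (i : ℕ) := hβ i (Finsupp.mem_support_iff.mpr hβi)
    have hvi : v < i := Fin.lt_def.mpr (lt_of_lt_of_le hvN hiN)
    have hβv : β v = 0 := by
      by_contra h0
      exact absurd (hβ v (Finsupp.mem_support_iff.mpr h0)) (not_le.mpr hvN)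
    exact Finsupp.mem_support_iff.mp hv ((hji v hvi).trans hβv)

end GBaux

open GBaux

/-- Elimination with lexicographic Gröbner bases. -/
theorem stmt_12 {n k : ℕ} (I : Ideal (MvPolynomial (Fin n) K))
    (g : Fin k → MvPolynomial (Fin n) K)
    (hGB : IsGroebnerBasis (MonomialOrder.lex (σ := Fin n)) g I)
    (j : ℕ) (hj : j ≤ n) (S : Set (Fin n)) (hS : S = {v : Fin n | n - j ≤ (v : ℕ)}) :
    (∀ f : supported K S,
        (f : MvPolynomial (Fin n) K) ∈ I ↔
          f ∈ Ideal.span {p : supported K S | ∃ i, (p : MvPolynomial (Fin n) K) = g i}) ∧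
      ∀ f : supported K S, (f : MvPolynomial (Fin n) K) ∈ I →
        (f : MvPolynomial (Fin n) K) ≠ 0 →
          ∃ i, g i ∈ supported K S ∧ g i ≠ 0 ∧
            leadExp (MonomialOrder.lex (σ := Fin n)) (g i) ≤
              leadExp (MonomialOrder.lex (σ := Fin n)) (f : MvPolynomial (Fin n) K) := by
  classical
  set m := MonomialOrder.lex (σ := Fin n) with hm
  -- key claim: if q ∈ supported K S is nonzero and in I, some gᵢ works and lies in supported K S
  have key : ∀ q : MvPolynomial (Fin n) K, q ∈ supported K S → q ∈ I → q ≠ 0 →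
      ∃ i, g i ∈ supported K S ∧ g i ≠ 0 ∧ leadExp m (g i) ≤ leadExp m q := by
    intro q hqS hqI hq0
    obtain ⟨i, hgi0, hle⟩ := hGB.2 q hqI hq0
    refine ⟨i, ?_, hgi0, hle⟩
    -- lead exponent of q has support in S
    have hq_lead : ∀ v ∈ (leadExp m q).support, n - j ≤ (v : ℕ) := by
      intro v hv
      have := mem_supported_iff'.mp hqS _ (leadExp_mem m hq0) v hv
      rwa [hS] at this
    -- hence lead exponent of g i has support in S (pointwise ≤)
    have hg_lead : ∀ v ∈ (leadExp m (g i)).support, n - j ≤ (v : ℕ) := by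
      intro v hv
      apply hq_lead
      rw [Finsupp.mem_support_iff] at hv ⊢
      intro h0
      exact hv (Nat.le_zero.mp (h0 ▸ Finsupp.le_def.mp hle v))
    -- every monomial of g i has support in S
    rw [mem_supported_iff']
    intro d hd v hv
    rw [hS]
    refine support_ge_of_lex_le (β := leadExp m (g i)) ?_ hg_lead v hv
    exact le_toSyn_leadExp m hd
  -- backward direction of the first part
  have back : ∀ f : supported K S,
      f ∈ Ideal.span {p : supported K S | ∃ i, (p : MvPolynomial (Fin n) K) = g i} →
      (f : MvPolynomial (Fin n) K) ∈ I := by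
    intro f hf
    induction hf using Submodule.span_induction with
    | mem p hp => obtain ⟨i, hi⟩ := hp; rw [hi]; exact hGB.1 i
    | zero => simpa using I.zero_mem
    | add a b _ _ ha hb => simpa using I.add_mem ha hb
    | smul r a _ ha => simpa using I.mul_mem_left (r : MvPolynomial (Fin n) K) ha
  -- forward direction, by well-founded induction on the lead exponent
  have fwd : ∀ (d : m.syn) (q : MvPolynomial (Fin n) K) (hq : q ∈ supported K S),
      q ∈ I → m.toSyn (leadExp m q) = d →
      (⟨q, hq⟩ : supported K S) ∈
        Ideal.span {p : supported K S | ∃ i, (p : MvPolynomial (Fin n) K) = g i} := by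
    intro d
    induction d using WellFoundedLT.induction with
    | _ d IH =>
      intro q hqS hqI hqd
      by_cases hq0 : q = 0
      · have : (⟨q, hqS⟩ : supported K S) = 0 := by ext; simp [hq0]
        rw [this]; exact Ideal.zero_mem _
      obtain ⟨i, hgiS, hgi0, hle⟩ := key q hqS hqI hq0
      set δ : Fin n →₀ ℕ := leadExp m q - leadExp m (g i) with hδ
      have hδadd : leadExp m (g i) + δ = leadExp m q := by
        rw [hδ, add_tsub_cancel_of_le hle]
      set c : K := q.coeff (leadExp m q) / (g i).coeff (leadExp m (g i)) with hc
      have hgc0 : (g i).coeff (leadExp m (g i)) ≠ 0 :=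
        MvPolynomial.mem_support_iff.mp (leadExp_mem m hgi0)
      set q' : MvPolynomial (Fin n) K := q - MvPolynomial.monomial δ c * g i with hq'
      -- the monomial is supported in S
      have hmonS : (MvPolynomial.monomial δ c : MvPolynomial (Fin n) K) ∈ supported K S := by
        rw [mem_supported_iff']
        intro e he v hv
        have heδ : e = δ := Finset.mem_singleton.mp (MvPolynomial.support_monomial_subset he)
        subst heδ
        have hvq : v ∈ (leadExp m q).support := by
          rw [Finsupp.mem_support_iff] at hv ⊢
          intro h0
          apply hv
          simp [hδ, Finsupp.tsub_apply, h0]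
        exact mem_supported_iff'.mp hqS _ (leadExp_mem m hq0) v hvq
      have hq'S : q' ∈ supported K S :=
        Subalgebra.sub_mem _ hqS (Subalgebra.mul_mem _ hmonS hgiS)
      have hq'I : q' ∈ I := I.sub_mem hqI (I.mul_mem_left _ (hGB.1 i))
      -- every exponent of q' is strictly below leadExp m q
      have hq'small : ∀ e ∈ q'.support, m.toSyn e < m.toSyn (leadExp m q) := by
        intro e he
        rw [MvPolynomial.mem_support_iff] at he
        rcases lt_trichotomy (m.toSyn e) (m.toSyn (leadExp m q)) with h | h | h
        · exact h
        · exfalso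
          have heq : e = leadExp m q := m.toSyn.injective h
          apply he
          rw [hq', MvPolynomial.coeff_sub, MvPolynomial.coeff_monomial_mul', heq,
            if_pos (by rw [← hδadd]; exact le_add_self)]
          have : leadExp m q - δ = leadExp m (g i) := by
            rw [← hδadd, add_tsub_cancel_right]
          rw [this, hc, div_mul_cancel₀ _ hgc0, sub_self]
        · exfalso
          apply he
          rw [hq', MvPolynomial.coeff_sub, coeff_eq_zero_of_lt m h,
            MvPolynomial.coeff_monomial_mul']
          split_ifs with hde
          · rw [coeff_eq_zero_of_lt m, mul_zero, sub_self]
            have h3 : m.toSyn (leadExp m (g i)) + m.toSyn δ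
                < m.toSyn (e - δ) + m.toSyn δ := by
              rw [← map_add, ← map_add, hδadd, tsub_add_cancel_of_le hde]
              exact h
            exact lt_of_add_lt_add_right h3
          · simp
      by_cases hq'0 : q' = 0
      · -- q = monomial δ c * g i
        have hqeq : (⟨q, hqS⟩ : supported K S) =
            (⟨MvPolynomial.monomial δ c, hmonS⟩ : supported K S) * ⟨g i, hgiS⟩ := by
          apply Subtype.ext
          have h0 : q - MvPolynomial.monomial δ c * g i = 0 := hq'0
          push_cast
          linear_combination h0
        rw [hqeq]
        exact Ideal.mul_mem_left _ _ (Ideal.subset_span ⟨i, rfl⟩)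
      · have hlt : m.toSyn (leadExp m q') < d := by
          rw [← hqd, leadExp, AddEquiv.apply_symm_apply]
          apply lt_of_le_of_ne (Finset.sup_le fun e he => le_of_lt (hq'small e he))
          intro habs
          obtain ⟨b, hb, hb'⟩ := Finset.exists_mem_eq_sup q'.support
            (MvPolynomial.support_nonempty.mpr hq'0) (fun α => m.toSyn α)
          exact absurd (habs ▸ hb' ▸ hq'small b hb) (lt_irrefl _)
        have hrec := IH _ hlt q' hq'S hq'I rfl
        have hqeq : (⟨q, hqS⟩ : supported K S) =
            (⟨q', hq'S⟩ : supported K S) +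
              (⟨MvPolynomial.monomial δ c, hmonS⟩ : supported K S) * ⟨g i, hgiS⟩ := by
          apply Subtype.ext
          push_cast
          rw [hq']
          ring
        rw [hqeq]
        exact Ideal.add_mem _ hrec (Ideal.mul_mem_left _ _ (Ideal.subset_span ⟨i, rfl⟩))
  constructor
  · intro f
    exact ⟨fun hf => fwd _ f f.2 hf rfl, back f⟩
  · intro f hfI hf0
    exact key f f.2 hfI hf0
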